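/- Let G_1,…,G_m be graphs with V(G_k) ⊆ V for all k, and for A ⊆ {1,…,m} let G_A denote the graph with vertex set V and edge set ∪_{a∈A} E(G_a). Then for any A, B ⊆ {1,…,m} and any t ≥ 0: |B_t(G_{A∪B})| ≤ |B_t(G_A)| + t|U_B| and N₁(G_{A∪B}) ≤ max{ |B_t(G_A)| + t|U_B|, t }, where U_B = ∪_{k∈B} V(G_k). -/

import Mathlib

open Finset
open scoped Classical

noncomputable section

/-- Number of vertices of the connected component of `i` in `G`. -/
def compSize {V : Type*} [Fintype V] (G : SimpleGraph V) (i : V) : ℕ :=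
  Nat.card {j : V // G.Reachable i j}

/-- The size `N₁(G)` of the largest connected component of `G`. -/
def largestComp {V : Type*} [Fintype V] (G : SimpleGraph V) : ℕ :=
  Finset.univ.sup fun i => compSize G i

/-- The size `N₂(G)` of the second largest connected component of `G`
(zero when `G` is connected). -/
def secondComp {V : Type*} [Fintype V] (G : SimpleGraph V) : ℕ :=
  Finset.univ.sup fun j =>
    if ∃ i, compSize G i = largestComp G ∧ ¬ G.Reachable i j then compSize G j else 0

/-- The set `B_t(G)` of vertices whose connected component has more than `t`
vertices. -/
def bigCompSet {V : Type*} [Fintype V] (G : SimpleGraph V) (t : ℕ) : Finset V :=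
  Finset.univ.filter fun i => t < compSize G i

end

noncomputable section

/-- The unordered pairs of distinct elements of a finite set `W`. -/
def pairsIn {V : Type*} (W : Finset V) : Finset (Sym2 V) :=
  W.sym2.filter fun e => ¬ e.IsDiag

/-- The simple graph on `V` whose edges are the non-diagonal members of `E`. -/
def graphOf {V : Type*} (E : Finset (Sym2 V)) : SimpleGraph V where
  Adj i j := i ≠ j ∧ s(i, j) ∈ E
  symm := by
    constructor
    intro i j h
    exact ⟨h.1.symm, by rw [Sym2.eq_swap]; exact h.2⟩
  loopless := ⟨fun i h => h.1 rfl⟩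


lemma compSize_eq {V : Type*} [Fintype V] (G : SimpleGraph V) (i : V) :
    compSize G i = (Finset.univ.filter fun j => G.Reachable i j).card := by
  rw [compSize, Nat.card_eq_fintype_card, Fintype.card_subtype]

lemma compSize_congr {V : Type*} [Fintype V] (G : SimpleGraph V) {i i' : V}
    (h : G.Reachable i i') : compSize G i = compSize G i' := by
  simp only [compSize_eq]
  congr 1
  ext j
  simp only [mem_filter, mem_univ, true_and]
  exact ⟨fun hj => h.symm.trans hj, fun hj => h.trans hj⟩

lemma walk_cross {V : Type*} (G : SimpleGraph V) (P : V → Prop) :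
    ∀ {i j : V}, G.Walk i j → P i → ¬ P j → ∃ x y, G.Adj x y ∧ P x ∧ ¬ P y := by
  intro i j p
  induction p with
  | nil => intro h h'; exact absurd h h'
  | @cons i k j h p ih =>
    intro hi hj
    by_cases hk : P k
    · exact ih hk hj
    · exact ⟨i, k, h, hi, hk⟩

/-- **Lemma (truncating an overlay of graphs).**
Let `G₁, …, G_m` be graphs with vertex sets `W k ⊆ V` and edge sets `E k`, and for
`A ⊆ {1,…,m}` let `G_A` be the graph on `V` with edge set `⋃_{a ∈ A} E a`. Then for
any `A, B` and `t ≥ 0`: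
`|B_t(G_{A∪B})| ≤ |B_t(G_A)| + t |U_B|` and
`N₁(G_{A∪B}) ≤ max {|B_t(G_A)| + t |U_B|, t}`, where `U_B = ⋃_{k ∈ B} W k`. -/
theorem overlay_truncation
    {V : Type*} [Fintype V] (m : ℕ)
    (W : Fin m → Finset V) (E : Fin m → Finset (Sym2 V))
    (hE : ∀ k, E k ⊆ pairsIn (W k))
    (A B : Finset (Fin m)) (t : ℕ) :
    (bigCompSet (graphOf ((A ∪ B).biUnion E)) t).card ≤
        (bigCompSet (graphOf (A.biUnion E)) t).card + t * (B.biUnion W).card ∧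
      largestComp (graphOf ((A ∪ B).biUnion E)) ≤
        max ((bigCompSet (graphOf (A.biUnion E)) t).card + t * (B.biUnion W).card) t := by
  set G := graphOf ((A ∪ B).biUnion E) with hG
  set GA := graphOf (A.biUnion E) with hGA
  set U := B.biUnion W with hU
  -- GA ≤ G
  have hle : GA ≤ G := by
    intro x y hxy
    refine ⟨hxy.1, ?_⟩
    rcases mem_biUnion.1 hxy.2 with ⟨k, hk, hmem⟩
    exact mem_biUnion.2 ⟨k, mem_union_left _ hk, hmem⟩
  -- key claim
  have key : ∀ i, t < compSize G i → compSize GA i ≤ t →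
      ∃ u ∈ U, GA.Reachable i u := by
    intro i hGi hGAi
    have hsub : (Finset.univ.filter fun j => GA.Reachable i j) ⊆
        Finset.univ.filter fun j => G.Reachable i j := by
      intro j hj
      simp only [mem_filter, mem_univ, true_and] at hj ⊢
      exact hj.mono hle
    have hlt : (Finset.univ.filter fun j => GA.Reachable i j).card <
        (Finset.univ.filter fun j => G.Reachable i j).card := by
      rw [← compSize_eq, ← compSize_eq]
      exact lt_of_le_of_lt hGAi hGi
    have : ∃ j, G.Reachable i j ∧ ¬ GA.Reachable i j := by
      by_contra hcon
      push_neg at hcon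
      have : (Finset.univ.filter fun j => G.Reachable i j) ⊆
          Finset.univ.filter fun j => GA.Reachable i j := by
        intro j hj
        simp only [mem_filter, mem_univ, true_and] at hj ⊢
        exact hcon j hj
      exact absurd (card_le_card this) (not_le.2 hlt)
    obtain ⟨j, hj1, hj2⟩ := this
    obtain ⟨p⟩ := hj1
    obtain ⟨x, y, hxy, hx, hy⟩ := walk_cross G (fun z => GA.Reachable i z) p
      (SimpleGraph.Reachable.refl i) hj2
    rcases mem_biUnion.1 hxy.2 with ⟨k, hk, hmem⟩
    by_cases hkA : k ∈ A
    · exfalso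
      have : GA.Adj x y := ⟨hxy.1, mem_biUnion.2 ⟨k, hkA, hmem⟩⟩
      exact hy (hx.trans this.reachable)
    · have hkB : k ∈ B := (mem_union.1 hk).resolve_left hkA
      have hxW : x ∈ W k := by
        have := hE k hmem
        rw [pairsIn, mem_filter, mk_mem_sym2_iff] at this
        exact this.1.1
      exact ⟨x, mem_biUnion.2 ⟨k, hkB, hxW⟩, hx⟩
  -- part 1
  have part1 : (bigCompSet G t).card ≤ (bigCompSet GA t).card + t * U.card := by
    have hsub : bigCompSet G t ⊆ bigCompSet GA t ∪
        U.biUnion (fun u => Finset.univ.filter fun j =>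
          GA.Reachable u j ∧ compSize GA u ≤ t) := by
      intro i hi
      rw [bigCompSet, mem_filter] at hi
      by_cases hA : t < compSize GA i
      · exact mem_union_left _ (by rw [bigCompSet, mem_filter]; exact ⟨mem_univ _, hA⟩)
      · push_neg at hA
        obtain ⟨u, huU, hru⟩ := key i hi.2 hA
        refine mem_union_right _ (mem_biUnion.2 ⟨u, huU, ?_⟩)
        simp only [mem_filter, mem_univ, true_and]
        exact ⟨hru.symm, by rw [← compSize_congr GA hru]; exact hA⟩
    calc (bigCompSet G t).card ≤ _ := card_le_card hsub
      _ ≤ (bigCompSet GA t).card + (U.biUnion _).card := card_union_le _ _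
      _ ≤ (bigCompSet GA t).card + t * U.card := by
          gcongr
          calc (U.biUnion _).card ≤ ∑ u ∈ U, (Finset.univ.filter fun j =>
              GA.Reachable u j ∧ compSize GA u ≤ t).card := card_biUnion_le
            _ ≤ ∑ _u ∈ U, t := by
                refine sum_le_sum fun u _ => ?_
                by_cases h : compSize GA u ≤ t
                · calc (Finset.univ.filter fun j =>
                      GA.Reachable u j ∧ compSize GA u ≤ t).card
                      ≤ (Finset.univ.filter fun j => GA.Reachable u j).card := by
                        apply card_le_card
                        intro j hj
                        rw [mem_filter] at hj ⊢
                        exact ⟨hj.1, hj.2.1⟩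
                    _ = compSize GA u := (compSize_eq GA u).symm
                    _ ≤ t := h
                · have : (Finset.univ.filter fun j =>
                      GA.Reachable u j ∧ compSize GA u ≤ t) = ∅ := by
                      rw [filter_eq_empty_iff]
                      intro j _ hj
                      exact h hj.2
                  rw [this]; simp
            _ = t * U.card := by rw [sum_const, smul_eq_mul, mul_comm]
  refine ⟨part1, ?_⟩
  -- part 2
  rw [largestComp]
  apply Finset.sup_le
  intro i _
  by_cases hi : t < compSize G i
  · refine le_max_of_le_left ?_
    refine le_trans ?_ part1
    rw [compSize_eq]
    apply card_le_card
    intro j hj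
    rw [mem_filter] at hj
    rw [bigCompSet, mem_filter]
    exact ⟨mem_univ _, by rw [← compSize_congr G hj.2]; exact hi⟩
  · exact le_max_of_le_right (not_lt.1 hi)

end
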